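/- Let α ∈ (0,1] and let Σ : ℝ → ℝ be bounded and α-Hölder continuous on all of ℝ with Hölder constant C₂, i.e. |Σ(u) - Σ(v)| ≤ C₂ |u - v|^α for all u, v ∈ ℝ. Define h(x) = ∫_{0}^{x} e^{-Σ(y)} dy. Then h is a C¹ bijection of ℝ, its inverse h⁻¹ is differentiable with (h⁻¹)'(u) = e^{Σ(h⁻¹(u))}, and for all u, v ∈ ℝ: |(h⁻¹)'(u) - (h⁻¹)'(v)| ≤ C₂ e^{(1+α)‖Σ‖_∞} |u - v|^α; that is, (h⁻¹)' is globally α-Hölder continuous with constant C₂ e^{(1+α)‖Σ‖_∞}. -/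
import Mathlib

open MeasureTheory Set

theorem stmt_11 (α C₂ : ℝ) (hα : α ∈ Set.Ioc (0:ℝ) 1)
    (S : ℝ → ℝ) (hSb : ∃ C : ℝ, ∀ x, |S x| ≤ C)
    (hSH : ∀ u v : ℝ, |S u - S v| ≤ C₂ * |u - v| ^ α) :
    let h : ℝ → ℝ := fun x => ∫ y in (0:ℝ)..x, Real.exp (-S y)
    ContDiff ℝ 1 h ∧ Function.Bijective h ∧
    (∀ u : ℝ, HasDerivAt (Function.invFun h)
      (Real.exp (S (Function.invFun h u))) u) ∧
    (∀ u v : ℝ, |Real.exp (S (Function.invFun h u)) - Real.exp (S (Function.invFun h v))| ≤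
      C₂ * Real.exp ((1 + α) * (⨆ x : ℝ, |S x|)) * |u - v| ^ α) := by
  obtain ⟨hα0, hα1⟩ := hα
  obtain ⟨C, hC⟩ := hSb
  intro h
  have hC₂ : 0 ≤ C₂ := by
    have h1 := hSH 0 1
    simp at h1
    exact le_trans (abs_nonneg _) h1
  -- continuity of S
  have hScont : Continuous S := by
    rw [continuous_iff_continuousAt]
    intro x
    rw [ContinuousAt, ← tendsto_sub_nhds_zero_iff]
    apply squeeze_zero_norm (fun y => by simpa using hSH y x)
    have h1 : Filter.Tendsto (fun y : ℝ => |y - x|) (nhds x) (nhds 0) := by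
      have hcc : Continuous (fun y : ℝ => |y - x|) :=
        (continuous_id.sub continuous_const).abs
      simpa using hcc.tendsto x
    have h2 : Filter.Tendsto (fun t : ℝ => C₂ * t ^ α) (nhds 0) (nhds (C₂ * (0:ℝ) ^ α)) :=
      ((Real.continuousAt_rpow_const 0 α (Or.inr hα0.le)).tendsto).const_mul C₂
    rw [Real.zero_rpow (ne_of_gt hα0), mul_zero] at h2
    exact h2.comp h1
  have hfc : Continuous fun y => Real.exp (-S y) := Real.continuous_exp.comp hScont.neg
  have hint : ∀ a b : ℝ, IntervalIntegrable (fun y => Real.exp (-S y)) volume a b :=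
    fun a b => hfc.intervalIntegrable a b
  have hderiv : ∀ x : ℝ, HasDerivAt h (Real.exp (-S x)) x := fun x =>
    intervalIntegral.integral_hasDerivAt_right (hint 0 x)
      (hfc.stronglyMeasurableAtFilter _ _) hfc.continuousAt
  have hderiv' : deriv h = fun x => Real.exp (-S x) := funext fun x => (hderiv x).deriv
  have hcd : ContDiff ℝ 1 h := by
    rw [contDiff_one_iff_deriv]
    exact ⟨fun x => (hderiv x).differentiableAt, hderiv' ▸ hfc⟩
  have hmono : StrictMono h := by
    apply strictMono_of_deriv_pos
    intro x
    rw [hderiv']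
    exact Real.exp_pos _
  -- lower/upper linear bounds for surjectivity
  have hbound : ∀ x : ℝ, 0 ≤ x → Real.exp (-C) * x ≤ h x := by
    intro x hx
    have : ∫ y in (0:ℝ)..x, Real.exp (-C) ≤ ∫ y in (0:ℝ)..x, Real.exp (-S y) := by
      apply intervalIntegral.integral_mono_on hx (intervalIntegrable_const) (hint 0 x)
      intro y _
      exact Real.exp_le_exp.2 (neg_le_neg ((abs_le.1 (hC y)).2))
    simpa [mul_comm] using this
  have hbound' : ∀ x : ℝ, x ≤ 0 → h x ≤ Real.exp (-C) * x := by
    intro x hx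
    have h1 : ∫ y in x..(0:ℝ), Real.exp (-C) ≤ ∫ y in x..(0:ℝ), Real.exp (-S y) := by
      apply intervalIntegral.integral_mono_on hx (intervalIntegrable_const) (hint x 0)
      intro y _
      exact Real.exp_le_exp.2 (neg_le_neg ((abs_le.1 (hC y)).2))
    have h2 : h x = -∫ y in x..(0:ℝ), Real.exp (-S y) :=
      intervalIntegral.integral_symm x 0
    rw [h2]
    simp only [intervalIntegral.integral_const, smul_eq_mul] at h1
    nlinarith [h1]
  have hsurj : Function.Surjective h := by
    apply Continuous.surjective hcd.continuous
    · apply Filter.tendsto_atTop_mono' _ _ (Filter.Tendsto.const_mul_atTop (Real.exp_pos (-C)) Filter.tendsto_id)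
      filter_upwards [Filter.eventually_ge_atTop (0:ℝ)] with x hx
      exact hbound x hx
    · apply Filter.tendsto_atBot_mono' _ _ (Filter.Tendsto.const_mul_atBot (Real.exp_pos (-C)) Filter.tendsto_id)
      filter_upwards [Filter.eventually_le_atBot (0:ℝ)] with x hx
      exact hbound' x hx
  have hbij : Function.Bijective h := ⟨hmono.injective, hsurj⟩
  have hri : Function.RightInverse (Function.invFun h) h := Function.rightInverse_invFun hsurj
  -- invFun h equals the order iso inverse, hence continuous
  have hinvcont : Continuous (Function.invFun h) := by
    have heq : Function.invFun h = (StrictMono.orderIsoOfSurjective h hmono hsurj).symm := by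
      funext u
      apply hmono.injective
      rw [hri u]
      exact (StrictMono.orderIsoOfSurjective_self_symm_apply h hmono hsurj u).symm
    rw [heq]
    exact OrderIso.continuous _
  have hinvderiv : ∀ u : ℝ, HasDerivAt (Function.invFun h)
      (Real.exp (S (Function.invFun h u))) u := by
    intro u
    have := HasDerivAt.of_local_left_inverse (hinvcont.continuousAt)
      (hderiv (Function.invFun h u)) (ne_of_gt (Real.exp_pos _))
      (Filter.Eventually.of_forall hri)
    rwa [← Real.exp_neg, neg_neg] at this
  refine ⟨hcd, hbij, hinvderiv, ?_⟩
  -- Hölder continuity of (h⁻¹)'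
  set M : ℝ := ⨆ x : ℝ, |S x| with hM
  have hMb : ∀ x, |S x| ≤ M := fun x => le_ciSup ⟨C, fun _ ⟨y, hy⟩ => hy ▸ hC y⟩ x
  have hM0 : 0 ≤ M := le_trans (abs_nonneg _) (hMb 0)
  have hSM : ∀ x, S x ≤ M := fun x => (abs_le.1 (hMb x)).2
  -- exp is Lipschitz with constant e^M on (-∞, M]
  have hexplip : ∀ a b : ℝ, a ≤ M → b ≤ M →
      |Real.exp a - Real.exp b| ≤ Real.exp M * |a - b| := by
    have key : ∀ a b : ℝ, b ≤ a → a ≤ M → Real.exp a - Real.exp b ≤ Real.exp M * (a - b) := by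
      intro a b hba haM
      have h1 : Real.exp a * (1 + (b - a)) ≤ Real.exp b := by
        have := Real.add_one_le_exp (b - a)
        calc Real.exp a * (1 + (b - a)) ≤ Real.exp a * Real.exp (b - a) := by
              apply mul_le_mul_of_nonneg_left _ (Real.exp_pos a).le
              linarith
          _ = Real.exp b := by rw [← Real.exp_add]; ring_nf
      have h2 : Real.exp a ≤ Real.exp M := Real.exp_le_exp.2 haM
      nlinarith
    intro a b haM hbM
    rcases le_total b a with hba | hab
    · rw [abs_of_nonneg (by linarith [Real.exp_le_exp.2 hba] : (0:ℝ) ≤ Real.exp a - Real.exp b),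
        abs_of_nonneg (by linarith : (0:ℝ) ≤ a - b)]
      exact key a b hba haM
    · rw [abs_sub_comm, abs_sub_comm a b,
        abs_of_nonneg (by linarith [Real.exp_le_exp.2 hab] : (0:ℝ) ≤ Real.exp b - Real.exp a),
        abs_of_nonneg (by linarith : (0:ℝ) ≤ b - a)]
      exact key b a hab hbM
  -- invFun h is Lipschitz with constant e^M
  have hinvlip : ∀ u v : ℝ, |Function.invFun h u - Function.invFun h v| ≤
      Real.exp M * |u - v| := by
    intro u v
    have := Convex.norm_image_sub_le_of_norm_hasDerivWithin_le
      (f := Function.invFun h) (f' := fun w => Real.exp (S (Function.invFun h w)))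
      (s := Set.univ) (fun w _ => (hinvderiv w).hasDerivWithinAt)
      (fun w _ => by
        rw [Real.norm_eq_abs, abs_of_pos (Real.exp_pos _)]
        exact Real.exp_le_exp.2 (hSM _)) convex_univ (mem_univ v) (mem_univ u)
    simpa [Real.norm_eq_abs] using this
  intro u v
  set a := Function.invFun h u
  set b := Function.invFun h v
  calc |Real.exp (S a) - Real.exp (S b)| ≤ Real.exp M * |S a - S b| :=
        hexplip _ _ (hSM a) (hSM b)
    _ ≤ Real.exp M * (C₂ * |a - b| ^ α) := by
        apply mul_le_mul_of_nonneg_left (hSH a b) (Real.exp_pos M).le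
    _ ≤ Real.exp M * (C₂ * (Real.exp M * |u - v|) ^ α) := by
        apply mul_le_mul_of_nonneg_left _ (Real.exp_pos M).le
        apply mul_le_mul_of_nonneg_left _ hC₂
        exact Real.rpow_le_rpow (abs_nonneg _) (hinvlip u v) hα0.le
    _ = C₂ * Real.exp ((1 + α) * M) * |u - v| ^ α := by
        have hexp : (Real.exp M) ^ α = Real.exp (M * α) := by
          rw [← Real.exp_one_rpow M, ← Real.rpow_mul (Real.exp_pos 1).le, Real.exp_one_rpow]
        rw [Real.mul_rpow (Real.exp_pos M).le (abs_nonneg _), hexp]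
        rw [show (1 + α) * M = M + M * α by ring, Real.exp_add]
        ring
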